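/- For the three-qutrit code, the reduced density matrix of the third qutrit of any encoded state |ψ̃⟩ = Σᵢ aᵢ|ĩ⟩ (with Σ|aᵢ|² = 1) equals the maximally mixed state I/3, independent of the coefficients aᵢ. -/

import Mathlib

open scoped BigOperators
open Matrix

/-- Standard basis vector `|ijk⟩` of `ℂ³ ⊗ ℂ³ ⊗ ℂ³`, first two factors grouped. -/
noncomputable def ket3 (i j k : Fin 3) : (Fin 3 × Fin 3) × Fin 3 → ℂ :=
  fun p => if p = ((i, j), k) then 1 else 0

/-- The three-qutrit code vectors `|ĩ⟩`. -/
noncomputable def codeVec : Fin 3 → ((Fin 3 × Fin 3) × Fin 3 → ℂ) :=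
  ![((Real.sqrt 3 : ℂ))⁻¹ • (ket3 0 0 0 + ket3 1 1 1 + ket3 2 2 2),
    ((Real.sqrt 3 : ℂ))⁻¹ • (ket3 0 1 2 + ket3 1 2 0 + ket3 2 0 1),
    ((Real.sqrt 3 : ℂ))⁻¹ • (ket3 0 2 1 + ket3 1 0 2 + ket3 2 1 0)]

/-- Outer product `|ψ⟩⟨ψ|`. -/
noncomputable def outer (ψ : (Fin 3 × Fin 3) × Fin 3 → ℂ) :
    Matrix ((Fin 3 × Fin 3) × Fin 3) ((Fin 3 × Fin 3) × Fin 3) ℂ :=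
  fun p q => ψ p * star (ψ q)

/-- Partial trace over the first two qutrits. -/
noncomputable def ptrace12
    (M : Matrix ((Fin 3 × Fin 3) × Fin 3) ((Fin 3 × Fin 3) × Fin 3) ℂ) :
    Matrix (Fin 3) (Fin 3) ℂ :=
  fun k l => ∑ p : Fin 3 × Fin 3, M (p, k) (p, l)

/-- The reduced density matrix of the third qutrit of any encoded state
`|ψ̃⟩ = Σᵢ aᵢ|ĩ⟩` with `Σ|aᵢ|² = 1` is the maximally mixed state `I/3`. -/
theorem thirdQutrit_maximallyMixed (a : Fin 3 → ℂ) (h : ∑ i, ‖a i‖ ^ 2 = 1) :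
    ptrace12 (outer (∑ i, a i • codeVec i)) = (3 : ℂ)⁻¹ • (1 : Matrix (Fin 3) (Fin 3) ℂ) := by
  have hs : ((Real.sqrt 3 : ℂ))⁻¹ * ((Real.sqrt 3 : ℂ))⁻¹ = (3 : ℂ)⁻¹ := by
    rw [← Complex.ofReal_inv, ← Complex.ofReal_mul,
      ← Real.sqrt_inv, Real.mul_self_sqrt (by norm_num)]
    norm_num
  have hc : a 0 * (starRingEnd ℂ) (a 0) + a 1 * (starRingEnd ℂ) (a 1)
      + a 2 * (starRingEnd ℂ) (a 2) = 1 := by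
    simp only [Fin.sum_univ_three] at h
    rw [Complex.mul_conj, Complex.mul_conj, Complex.mul_conj,
      ← Complex.ofReal_add, ← Complex.ofReal_add]
    norm_cast
    simpa [Complex.normSq_eq_norm_sq] using h
  have hψ : ∀ i j k : Fin 3, (∑ m, a m • codeVec m) ((i, j), k)
      = if k = 2 * j - i then ((Real.sqrt 3 : ℂ))⁻¹ * a (j - i) else 0 := by
    intro i j k
    fin_cases i <;> fin_cases j <;> fin_cases k <;>
      simp (config := { decide := true }) [codeVec, ket3, Fin.sum_univ_three,
        Matrix.vecHead, Matrix.vecTail, show ((-1 : Fin 3)) = 2 from rfl,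
        show ((-2 : Fin 3)) = 1 from rfl] <;> ring
  ext k l
  simp only [ptrace12, outer, Fintype.sum_prod_type, Fin.sum_univ_three, hψ]
  fin_cases k <;> fin_cases l <;>
    simp (config := { decide := true }) [Matrix.smul_apply, Matrix.one_apply,
      show ((4 : ℕ) : Fin 3) = 1 from rfl, show ((3 : ℕ) : Fin 3) = 0 from rfl,
      show ((-1 : Fin 3)) = 2 from rfl, show ((-2 : Fin 3)) = 1 from rfl,
      map_inv₀, Complex.conj_ofReal] <;>
    linear_combination (a 0 * (starRingEnd ℂ) (a 0) + a 1 * (starRingEnd ℂ) (a 1)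
      + a 2 * (starRingEnd ℂ) (a 2)) * hs + (3 : ℂ)⁻¹ * hc
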